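/- For every integer m ≥ 1, the finite trigonometric sum ∑_{j=1}^{m-1} 1/sin⁴(jπ/m) equals (m⁴ + 10m² - 11)/45. -/

import Mathlib

open Real Finset
open Polynomial

private lemma eval_deriv_prod {ι : Type*} [DecidableEq ι] (s : Finset ι) (f : ι → ℝ) (x : ℝ)
    (hf : ∀ i ∈ s, x - f i ≠ 0) :
    (derivative (∏ i ∈ s, (X - C (f i)))).eval x
      = (∑ i ∈ s, (x - f i)⁻¹) * ∏ i ∈ s, (x - f i) := by
  induction s using Finset.induction_on with
  | empty => simp
  | @insert a s ha ih =>
    have hfa : x - f a ≠ 0 := hf a (Finset.mem_insert_self a s)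
    rw [Finset.prod_insert ha, Finset.sum_insert ha, Finset.prod_insert ha, derivative_mul]
    simp only [derivative_sub, derivative_X, derivative_C, sub_zero, one_mul, eval_add, eval_mul,
      eval_sub, eval_X, eval_C, eval_prod]
    rw [ih (fun i hi => hf i (Finset.mem_insert_of_mem hi))]
    field_simp

private lemma eval_deriv2_prod {ι : Type*} [DecidableEq ι] (s : Finset ι) (f : ι → ℝ) (x : ℝ)
    (hf : ∀ i ∈ s, x - f i ≠ 0) :
    (derivative (derivative (∏ i ∈ s, (X - C (f i))))).eval x
      = ((∑ i ∈ s, (x - f i)⁻¹) ^ 2 - ∑ i ∈ s, ((x - f i)⁻¹) ^ 2) * ∏ i ∈ s, (x - f i) := by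
  induction s using Finset.induction_on with
  | empty => simp
  | @insert a s ha ih =>
    have hfa : x - f a ≠ 0 := hf a (Finset.mem_insert_self a s)
    have hf' : ∀ i ∈ s, x - f i ≠ 0 := fun i hi => hf i (Finset.mem_insert_of_mem hi)
    rw [Finset.prod_insert ha, Finset.sum_insert ha, Finset.sum_insert ha, Finset.prod_insert ha]
    have hD2 : derivative (derivative ((X - C (f a)) * ∏ i ∈ s, (X - C (f i))))
        = 2 * derivative (∏ i ∈ s, (X - C (f i)))
          + (X - C (f a)) * derivative (derivative (∏ i ∈ s, (X - C (f i)))) := by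
      rw [derivative_mul]
      simp only [derivative_sub, derivative_X, derivative_C, sub_zero, one_mul,
        derivative_add, derivative_mul, derivative_one, zero_mul, zero_add]
      ring
    rw [hD2]
    simp only [eval_add, eval_mul, eval_sub, eval_X, eval_C, eval_ofNat]
    rw [ih hf', eval_deriv_prod s f x hf']
    field_simp
    ring

open Polynomial Finset

private def chebFacts (n : ℕ) : Prop :=
  (Polynomial.Chebyshev.U ℝ n).eval 1 = (n : ℝ) + 1 ∧
  (derivative (Polynomial.Chebyshev.U ℝ n)).eval 1 = (n : ℝ) * (n + 1) * (n + 2) / 3 ∧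
  (derivative (derivative (Polynomial.Chebyshev.U ℝ n))).eval 1
    = ((n : ℝ) - 1) * n * (n + 1) * (n + 2) * (n + 3) / 15 ∧
  (Polynomial.Chebyshev.U ℝ n).natDegree ≤ n

private lemma chebFacts_pair : ∀ n : ℕ, chebFacts n ∧ chebFacts (n + 1)
  | 0 => by
    constructor
    · refine ⟨by simp [Polynomial.Chebyshev.U_zero], ?_, ?_, ?_⟩ <;>
        simp [Polynomial.Chebyshev.U_zero]
    · have h1 : Polynomial.Chebyshev.U ℝ ((1 : ℕ) : ℤ) = 2 * X := by
        simp only [Nat.cast_one]; exact Polynomial.Chebyshev.U_one ℝ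
      have hd : derivative ((2 : ℝ[X]) * X) = 2 := by
        rw [derivative_mul]; simp
      refine ⟨?_, ?_, ?_, ?_⟩
      · rw [h1]; simp only [eval_mul, eval_ofNat, eval_X]; norm_num
      · rw [h1, hd]; simp only [eval_ofNat]; norm_num
      · rw [h1, hd]; simp only [derivative_ofNat, eval_zero]; norm_num
      · rw [h1]; exact le_trans (natDegree_mul_le) (by simp)
  | (n + 1) => by
    refine ⟨(chebFacts_pair n).2, ?_⟩
    obtain ⟨⟨u0, d0, e0, deg0⟩, ⟨u1, d1, e1, deg1⟩⟩ := chebFacts_pair n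
    have hrec : Polynomial.Chebyshev.U ℝ ((n + 2 : ℕ) : ℤ)
        = 2 * X * Polynomial.Chebyshev.U ℝ ((n + 1 : ℕ) : ℤ)
          - Polynomial.Chebyshev.U ℝ ((n : ℕ) : ℤ) := by
      push_cast
      exact Polynomial.Chebyshev.U_add_two ℝ n
    set p := Polynomial.Chebyshev.U ℝ ((n + 1 : ℕ) : ℤ) with hp
    set q := Polynomial.Chebyshev.U ℝ ((n : ℕ) : ℤ) with hq
    have hder1 : derivative (2 * X * p - q) = 2 * p + 2 * X * derivative p - derivative q := by
      rw [derivative_sub, derivative_mul, derivative_mul]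
      simp only [derivative_X, derivative_ofNat, zero_mul, zero_add, mul_one]
    have hder2 : derivative (derivative (2 * X * p - q))
        = 4 * derivative p + 2 * X * derivative (derivative p)
          - derivative (derivative q) := by
      rw [hder1, derivative_sub, derivative_add, derivative_mul, derivative_mul, derivative_mul]
      simp only [derivative_X, derivative_ofNat, zero_mul, zero_add, mul_one]
      ring
    refine ⟨?_, ?_, ?_, ?_⟩
    · rw [hrec, eval_sub, eval_mul, eval_mul, eval_X, eval_ofNat, u0, u1]
      push_cast; ring
    · rw [hrec, hder1]
      simp only [eval_sub, eval_add, eval_mul, eval_X, eval_ofNat]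
      rw [u1, d0, d1]; push_cast; ring
    · rw [hrec, hder2]
      simp only [eval_sub, eval_add, eval_mul, eval_X, eval_ofNat]
      rw [d1, e0, e1]; push_cast; ring
    · rw [hrec]
      refine le_trans (natDegree_sub_le _ _) (max_le ?_ (le_trans deg0 (by omega)))
      refine le_trans (natDegree_mul_le) ?_
      have h2X : ((2 : ℝ[X]) * X).natDegree ≤ 1 := le_trans (natDegree_mul_le) (by simp)
      omega

private lemma chebFacts_all (n : ℕ) : chebFacts n := (chebFacts_pair n).1

set_option maxHeartbeats 1000000 in
/-- For every integer `m ≥ 1`,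
`∑_{j=1}^{m-1} 1 / sin⁴(jπ/m) = (m⁴ + 10m² - 11) / 45`. -/
theorem sum_one_div_sin_pow_four (m : ℕ) (hm : 1 ≤ m) :
    ∑ j ∈ Finset.Ico 1 m, 1 / (Real.sin (j * Real.pi / m)) ^ 4
      = ((m : ℝ) ^ 4 + 10 * (m : ℝ) ^ 2 - 11) / 45 := by
  classical
  have hmR : (1:ℝ) ≤ (m:ℝ) := by exact_mod_cast hm
  have hm0 : (m : ℝ) ≠ 0 := by linarith
  set s : Finset ℕ := Finset.Ico 1 m with hs
  set g : ℕ → ℝ := fun j => Real.cos ((j:ℝ) * Real.pi / m) with hg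
  have hθ : ∀ j ∈ s, 0 < (j:ℝ) * Real.pi / m ∧ (j:ℝ) * Real.pi / m < Real.pi := by
    intro j hj
    rw [hs, Finset.mem_Ico] at hj
    have h1 : (1:ℝ) ≤ (j:ℝ) := by exact_mod_cast hj.1
    have h2 : (j:ℝ) < (m:ℝ) := by exact_mod_cast hj.2
    have hmpos : (0:ℝ) < (m:ℝ) := by linarith
    constructor
    · have hj0 : (0:ℝ) < (j:ℝ) := by linarith
      exact div_pos (mul_pos hj0 Real.pi_pos) hmpos
    · rw [div_lt_iff₀ hmpos]
      nlinarith [Real.pi_pos]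
  have hsin : ∀ j ∈ s, 0 < Real.sin ((j:ℝ) * Real.pi / m) := fun j hj =>
    Real.sin_pos_of_pos_of_lt_pi (hθ j hj).1 (hθ j hj).2
  have hcos : ∀ j ∈ s, -1 < g j ∧ g j < 1 := by
    intro j hj
    have h := hsin j hj
    have hsq := Real.sin_sq_add_cos_sq ((j:ℝ) * Real.pi / m)
    constructor <;> nlinarith
  have ha : ∀ j ∈ s, (1:ℝ) - g j ≠ 0 := fun j hj => by
    have := (hcos j hj).2; intro h; linarith [sub_eq_zero.mp h]
  have hb : ∀ j ∈ s, (0:ℝ) < 1 + g j := fun j hj => by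
    have := (hcos j hj).1; linarith
  -- the Chebyshev polynomial and its factorization
  set P : Polynomial ℝ := ∏ j ∈ s, (X - C (g j)) with hP
  set UU := Polynomial.Chebyshev.U ℝ ((m - 1 : ℕ) : ℤ) with hUU
  obtain ⟨hu, hd, he, hdeg⟩ :
      UU.eval 1 = ((m-1:ℕ) : ℝ) + 1 ∧
      (derivative UU).eval 1 = ((m-1:ℕ) : ℝ) * (((m-1:ℕ):ℝ) + 1) * (((m-1:ℕ):ℝ) + 2) / 3 ∧
      (derivative (derivative UU)).eval 1
        = (((m-1:ℕ) : ℝ) - 1) * ((m-1:ℕ):ℝ) * (((m-1:ℕ):ℝ) + 1) * (((m-1:ℕ):ℝ) + 2)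
            * (((m-1:ℕ):ℝ) + 3) / 15 ∧
      UU.natDegree ≤ m - 1 := chebFacts_pair (m - 1) |>.1
  have hc1 : ((m - 1 : ℕ) : ℝ) = (m:ℝ) - 1 := by
    push_cast [Nat.cast_sub hm]; ring
  have hUne : UU ≠ 0 := by
    intro h
    rw [h, eval_zero] at hu
    have : (0:ℝ) ≤ ((m-1:ℕ):ℝ) := Nat.cast_nonneg _
    linarith
  have hroot : ∀ j ∈ s, UU.IsRoot (g j) := by
    intro j hj
    have h0 := Polynomial.Chebyshev.U_real_cos ((j:ℝ) * Real.pi / m) ((m - 1 : ℕ) : ℤ)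
    have hmm : ((((m - 1 : ℕ) : ℤ)) : ℝ) + 1 = (m:ℝ) := by push_cast [Nat.cast_sub hm]; ring
    have hmt : ((m:ℝ)) * ((j:ℝ) * Real.pi / m) = (j:ℝ) * Real.pi := by field_simp
    rw [hmm, hmt, Real.sin_nat_mul_pi] at h0
    have := (hsin j hj).ne'
    rcases mul_eq_zero.mp h0 with h | h
    · exact h
    · exact absurd h this
  have hinj : ∀ a ∈ s, ∀ b ∈ s, g a = g b → a = b := by
    intro a ha' b hb' hab
    have h1 := hθ a ha'; have h2 := hθ b hb'
    have hab' : (a:ℝ) * Real.pi / m = (b:ℝ) * Real.pi / m :=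
      Real.injOn_cos ⟨h1.1.le, h1.2.le⟩ ⟨h2.1.le, h2.2.le⟩ hab
    field_simp [Real.pi_ne_zero] at hab'
    exact_mod_cast hab'
  have hdvd : P ∣ UU := by
    have hnd : (s.val.map g).Nodup :=
      Multiset.Nodup.map_on (fun a ha' b hb' h => hinj a ha' b hb' h) s.nodup
    have hle : (s.val.map g) ≤ UU.roots := by
      refine (Multiset.le_iff_subset hnd).2 ?_
      intro x hx
      rw [Multiset.mem_map] at hx
      obtain ⟨j, hj, rfl⟩ := hx
      exact Polynomial.mem_roots'.2 ⟨hUne, hroot j hj⟩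
    have h2 := (Multiset.prod_X_sub_C_dvd_iff_le_roots hUne (s.val.map g)).2 hle
    rw [Multiset.map_map] at h2
    rw [hP, Finset.prod_eq_multiset_prod]
    simpa [Function.comp] using h2
  obtain ⟨q, hq⟩ := hdvd
  have hPmono : P.Monic := Polynomial.monic_prod_of_monic _ _ (fun j _ => monic_X_sub_C _)
  have hPdeg : P.natDegree = m - 1 := by
    rw [hP, Polynomial.natDegree_prod_of_monic _ _ (fun j _ => monic_X_sub_C _)]
    simp [Polynomial.natDegree_X_sub_C, hs]
  have hq0 : q ≠ 0 := by
    rintro rfl; rw [mul_zero] at hq; exact hUne hq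
  have hqdeg : q.natDegree = 0 := by
    have hmul := Polynomial.natDegree_mul hPmono.ne_zero hq0
    rw [← hq] at hmul
    omega
  have hqC : q = C (q.coeff 0) := Polynomial.eq_C_of_natDegree_eq_zero hqdeg
  set c : ℝ := q.coeff 0 with hc
  set A : ℝ := ∑ j ∈ s, (1 - g j)⁻¹ with hA'
  set B : ℝ := ∑ j ∈ s, ((1 - g j)⁻¹) ^ 2 with hB'
  set Pi1 : ℝ := ∏ j ∈ s, (1 - g j) with hPi
  have hfne : ∀ j ∈ s, (1:ℝ) - g j ≠ 0 := ha
  have hevP : P.eval 1 = Pi1 := by simp [hP, Polynomial.eval_prod, hPi]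
  have hevP' : (derivative P).eval 1 = A * Pi1 := eval_deriv_prod s g 1 hfne
  have hevP'' : (derivative (derivative P)).eval 1 = (A ^ 2 - B) * Pi1 :=
    eval_deriv2_prod s g 1 hfne
  have hU1 : UU.eval 1 = Pi1 * c := by
    rw [hq, hqC, eval_mul, eval_C, hevP]
  have hU2 : (derivative UU).eval 1 = A * Pi1 * c := by
    rw [hq, hqC, derivative_mul, derivative_C, mul_zero, add_zero, eval_mul, eval_C, hevP']
  have hU3 : (derivative (derivative UU)).eval 1 = (A ^ 2 - B) * Pi1 * c := by
    rw [hq, hqC, derivative_mul, derivative_C, mul_zero, add_zero, derivative_mul,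
      derivative_C, mul_zero, add_zero, eval_mul, eval_C, hevP'']
  rw [hU1] at hu
  rw [hU2] at hd
  rw [hU3] at he
  rw [hc1] at hu hd he
  have hPc : Pi1 * c = (m:ℝ) := by rw [hu]; ring
  have hAval : A = ((m:ℝ) ^ 2 - 1) / 3 := by
    have h2 : A * (Pi1 * c) = A * (m:ℝ) := by rw [hPc]
    have h : A * (m:ℝ) = ((m:ℝ) ^ 2 - 1) / 3 * (m:ℝ) := by
      linear_combination hd - h2
    exact mul_right_cancel₀ hm0 h
  have hABval : A ^ 2 - B = ((m:ℝ) ^ 2 - 4) * ((m:ℝ) ^ 2 - 1) / 15 := by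
    have h2 : (A ^ 2 - B) * (Pi1 * c) = (A ^ 2 - B) * (m:ℝ) := by rw [hPc]
    have h : (A ^ 2 - B) * (m:ℝ) = ((m:ℝ) ^ 2 - 4) * ((m:ℝ) ^ 2 - 1) / 15 * (m:ℝ) := by
      linear_combination he - h2
    exact mul_right_cancel₀ hm0 h
  have hBval : B = A ^ 2 - ((m:ℝ) ^ 2 - 4) * ((m:ℝ) ^ 2 - 1) / 15 := by linarith
  -- reindexing j ↦ m - j
  have hflipg : ∀ j ∈ s, g (m - j) = - g j := by
    intro j hj
    rw [hs, Finset.mem_Ico] at hj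
    have hcast : ((m - j : ℕ):ℝ) = (m:ℝ) - (j:ℝ) := by
      push_cast [Nat.cast_sub hj.2.le]; ring
    have harg : ((m:ℝ) - (j:ℝ)) * Real.pi / m = Real.pi - (j:ℝ) * Real.pi / m := by
      field_simp
    show Real.cos (((m - j : ℕ):ℝ) * Real.pi / m) = - Real.cos ((j:ℝ) * Real.pi / m)
    rw [hcast, harg, Real.cos_pi_sub]
  have hsumA : ∑ j ∈ s, (1 + g j)⁻¹ = A := by
    have h1 : ∑ j ∈ s, (1 + g j)⁻¹ = ∑ j ∈ s, (1 - g (m - j))⁻¹ :=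
      Finset.sum_congr rfl (fun j hj => by rw [hflipg j hj, sub_neg_eq_add])
    rw [h1, hA', hs]
    have h2 := Finset.sum_Ico_reflect (fun k => (1 - g k)⁻¹) 1 (m := m) (n := m) (by omega)
    have e1 : m + 1 - m = 1 := by omega
    have e2 : m + 1 - 1 = m := by omega
    rw [e1, e2] at h2
    exact h2
  have hsumB : ∑ j ∈ s, ((1 + g j)⁻¹) ^ 2 = B := by
    have h1 : ∑ j ∈ s, ((1 + g j)⁻¹) ^ 2 = ∑ j ∈ s, ((1 - g (m - j))⁻¹) ^ 2 :=
      Finset.sum_congr rfl (fun j hj => by rw [hflipg j hj, sub_neg_eq_add])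
    rw [h1, hB', hs]
    have h2 := Finset.sum_Ico_reflect (fun k => ((1 - g k)⁻¹) ^ 2) 1 (m := m) (n := m) (by omega)
    have e1 : m + 1 - m = 1 := by omega
    have e2 : m + 1 - 1 = m := by omega
    rw [e1, e2] at h2
    exact h2
  -- per-term identity
  have hterm : ∀ j ∈ s, 1 / (Real.sin ((j:ℝ) * Real.pi / m)) ^ 4
      = (((1 - g j)⁻¹) ^ 2 + ((1 + g j)⁻¹) ^ 2 + (1 - g j)⁻¹ + (1 + g j)⁻¹) / 4 := by
    intro j hj
    have hs2 : Real.sin ((j:ℝ) * Real.pi / m) ^ 2 = (1 - g j) * (1 + g j) := by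
      have h := Real.sin_sq_add_cos_sq ((j:ℝ) * Real.pi / m)
      have : g j = Real.cos ((j:ℝ) * Real.pi / m) := rfl
      nlinarith
    have hs4 : Real.sin ((j:ℝ) * Real.pi / m) ^ 4 = ((1 - g j) * (1 + g j)) ^ 2 := by
      rw [← hs2]; ring
    rw [hs4]
    have h1 := ha j hj
    have h2 := (hb j hj).ne'
    have hsum2 : (1 - g j) + (1 + g j) = 2 := by ring
    field_simp
    nlinarith [sq_nonneg (g j)]
  calc ∑ j ∈ Finset.Ico 1 m, 1 / (Real.sin ((j:ℕ) * Real.pi / m)) ^ 4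
      = ∑ j ∈ s, (((1 - g j)⁻¹) ^ 2 + ((1 + g j)⁻¹) ^ 2 + (1 - g j)⁻¹ + (1 + g j)⁻¹) / 4 :=
        Finset.sum_congr rfl hterm
    _ = (∑ j ∈ s, (((1 - g j)⁻¹) ^ 2 + ((1 + g j)⁻¹) ^ 2 + (1 - g j)⁻¹ + (1 + g j)⁻¹)) / 4 := by
        rw [Finset.sum_div]
    _ = (B + B + A + A) / 4 := by
        rw [Finset.sum_add_distrib, Finset.sum_add_distrib, Finset.sum_add_distrib,
          hsumA, hsumB, ← hA', ← hB']
    _ = (A + B) / 2 := by ring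
    _ = ((m : ℝ) ^ 4 + 10 * (m : ℝ) ^ 2 - 11) / 45 := by
        rw [hBval, hAval]; ring
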